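/- Let N(t,x) = Σ_{n,k} a(n,k) t^k x^n where a(n,k) is the number of paths of length 2n with exactly 2k steps below the x-axis. Then N(t,x) = 1/(1 − x·c(x) − t·x·c(tx)), where c is the Catalan generating function; consequently a(n,k) = C_n for 0 ≤ k ≤ n and a(n,k) = 0 for k > n. -/

import Mathlib

def stepVal (b : Bool) : ℤ := if b then 1 else -1

def psum {m : ℕ} (f : Fin m → Bool) (p : ℕ) : ℤ :=
  (((List.ofFn f).take p).map stepVal).sum

def belowSteps {m : ℕ} (f : Fin m → Bool) : Finset (Fin m) :=
  Finset.univ.filter fun i => min (psum f i.1) (psum f (i.1 + 1)) < 0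

/-- a(n,k): the number of paths of length 2n with exactly 2k steps below the x-axis. -/
def aCount (n k : ℕ) : ℕ :=
  ((Finset.univ : Finset (Fin (2 * n) → Bool)).filter fun f =>
      psum f (2 * n) = 0 ∧ (belowSteps f).card = 2 * k).card

/-- c(x) in ℤ[[t]][[x]]. -/
noncomputable def cx : PowerSeries (PowerSeries ℤ) :=
  PowerSeries.mk fun n => ((catalan n : ℤ) : PowerSeries ℤ)

/-- c(tx) in ℤ[[t]][[x]]. -/
noncomputable def ctx : PowerSeries (PowerSeries ℤ) :=
  PowerSeries.mk fun n => ((catalan n : ℤ) : PowerSeries ℤ) * PowerSeries.X ^ n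

/-- The variable t. -/
noncomputable def tvar : PowerSeries (PowerSeries ℤ) :=
  PowerSeries.C (R := PowerSeries ℤ) PowerSeries.X

/-- N(t,x) = Σ a(n,k) tᵏ xⁿ. -/
noncomputable def Ngf : PowerSeries (PowerSeries ℤ) :=
  PowerSeries.mk fun n => PowerSeries.mk fun k => (aCount n k : ℤ)

namespace CF
open List Finset

def sval (l : List Bool) : ℤ := (l.map stepVal).sum
def ps (l : List Bool) (p : ℕ) : ℤ := ((l.take p).map stepVal).sum

@[simp] lemma ps_zero (l : List Bool) : ps l 0 = 0 := rfl
@[simp] lemma ps_nil (p : ℕ) : ps [] p = 0 := by simp [ps]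

lemma ps_cons (b : Bool) (t : List Bool) (p : ℕ) :
    ps (b :: t) (p + 1) = stepVal b + ps t p := by
  simp [ps, List.take_succ_cons]

lemma ps_append (a b : List Bool) (p : ℕ) :
    ps (a ++ b) p = ps a p + ps b (p - a.length) := by
  simp [ps, List.take_append]

lemma ps_of_le (l : List Bool) {p : ℕ} (h : l.length ≤ p) : ps l p = sval l := by
  simp [ps, sval, List.take_of_length_le h]

lemma ps_length (l : List Bool) : ps l l.length = sval l := ps_of_le l le_rfl

lemma ps_take (l : List Bool) (q p : ℕ) : ps (l.take q) p = ps l (min p q) := by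
  simp [ps, List.take_take]

lemma ps_succ (l : List Bool) {p : ℕ} (h : p < l.length) :
    ps l (p + 1) = ps l p + stepVal l[p] := by
  have h2 : p < (l.map stepVal).length := by simpa using h
  rw [ps, ps, List.map_take, List.map_take, List.take_succ, List.getElem?_eq_getElem h2]
  simp

lemma stepVal_not (b : Bool) : stepVal (!b) = - stepVal b := by cases b <;> simp [stepVal]

lemma sval_not (l : List Bool) : sval (l.map not) = - sval l := by
  induction l with
  | nil => simp [sval]
  | cons b t ih => simp [sval, stepVal_not] at *; omega

lemma ps_not (l : List Bool) (p : ℕ) : ps (l.map not) p = - ps l p := by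
  rw [ps, ps, ← List.map_take, ← sval, ← sval]; exact sval_not _

lemma sval_parity (l : List Bool) : (2 : ℤ) ∣ sval l - l.length := by
  induction l with
  | nil => simp [sval]
  | cons b t ih =>
    simp only [sval, List.map_cons, List.sum_cons, List.length_cons] at *
    cases b <;> simp [stepVal] <;> omega



def lowA : ℤ → List Bool → ℕ
  | _, [] => 0
  | h, b :: t => (if min h (h + stepVal b) < 0 then 1 else 0) + lowA (h + stepVal b) t

def low (l : List Bool) : ℕ := lowA 0 l

lemma lowA_sum (h : ℤ) (l : List Bool) :
    lowA h l = ∑ i ∈ Finset.range l.length,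
      (if min (h + ps l i) (h + ps l (i + 1)) < 0 then 1 else 0) := by
  induction l generalizing h with
  | nil => simp [lowA]
  | cons b t ih =>
    rw [List.length_cons, Finset.sum_range_succ']
    simp only [ps_cons, ps_zero, lowA, ih (h + stepVal b)]
    rw [add_comm]
    congr 1
    · exact Finset.sum_congr rfl fun i _ => by ring_nf
    · norm_num [show h + ps (b :: t) 1 = h + stepVal b by rw [ps_cons]; simp]

lemma lowA_append (h : ℤ) (a b : List Bool) :
    lowA h (a ++ b) = lowA h a + lowA (h + sval a) b := by
  induction a generalizing h with
  | nil => simp [lowA, sval]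
  | cons x t ih =>
    show (if min h (h + stepVal x) < 0 then 1 else 0) + lowA (h + stepVal x) (t ++ b) = _
    rw [ih]
    simp only [lowA, sval, List.map_cons, List.sum_cons, add_assoc]

lemma lowA_le_length (h : ℤ) (l : List Bool) : lowA h l ≤ l.length := by
  rw [lowA_sum]
  calc _ ≤ ∑ _i ∈ Finset.range l.length, 1 := by
        apply Finset.sum_le_sum; intro i _; split <;> simp
    _ = l.length := by simp

lemma lowA_eq_zero (h : ℤ) (l : List Bool) (hn : ∀ p, 0 ≤ h + ps l p) : lowA h l = 0 := by
  rw [lowA_sum]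
  apply Finset.sum_eq_zero
  intro i _
  have := hn i; have := hn (i + 1)
  split
  · omega
  · rfl

lemma lowA_eq_length (h : ℤ) (l : List Bool)
    (hn : ∀ p, p ≤ l.length → h + ps l p ≤ 0) : lowA h l = l.length := by
  rw [lowA_sum]
  have key : ∀ i ∈ Finset.range l.length,
      (if min (h + ps l i) (h + ps l (i + 1)) < 0 then (1:ℕ) else 0) = 1 := by
    intro i hi
    rw [Finset.mem_range] at hi
    have h1 := hn i (by omega)
    have h2 := hn (i + 1) (by omega)
    have h3 : ps l (i + 1) = ps l i + stepVal (l[i]'hi) := ps_succ l hi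
    have h4 : stepVal (l[i]'hi) = 1 ∨ stepVal (l[i]'hi) = -1 := by
      cases (l[i]'hi) <;> simp [stepVal]
    rw [if_pos (by omega)]
  rw [Finset.sum_congr rfl key]
  simp

lemma lowA_not (h : ℤ) (l : List Bool) :
    lowA (-h) (l.map not) = l.length - lowA h l := by
  have hle := lowA_le_length h l
  have : lowA (-h) (l.map not) + lowA h l = l.length := by
    rw [lowA_sum, lowA_sum, List.length_map, ← Finset.sum_add_distrib]
    have key : ∀ i ∈ Finset.range l.length,
        ((if min (-h + ps (l.map not) i) (-h + ps (l.map not) (i + 1)) < 0 then (1:ℕ) else 0) +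
          if min (h + ps l i) (h + ps l (i + 1)) < 0 then (1:ℕ) else 0) = 1 := by
      intro i hi
      rw [Finset.mem_range] at hi
      simp only [ps_not]
      have h3 : ps l (i + 1) = ps l i + stepVal (l[i]'hi) := ps_succ l hi
      have h4 : stepVal (l[i]'hi) = 1 ∨ stepVal (l[i]'hi) = -1 := by
        cases (l[i]'hi) <;> simp [stepVal]
      rcases h4 with h4 | h4 <;> rw [h4] at h3 <;>
        · split <;> split <;> omega
    rw [Finset.sum_congr rfl key]
    simp
  omega



open scoped Classical in
noncomputable def lists (L : ℕ) : Finset (List Bool) :=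
  (Finset.univ : Finset (Fin L → Bool)).image List.ofFn

lemma mem_lists {L : ℕ} {l : List Bool} : l ∈ lists L ↔ l.length = L := by
  constructor
  · rintro h
    rw [lists, Finset.mem_image] at h
    obtain ⟨f, -, rfl⟩ := h
    simp
  · intro h
    subst h
    rw [lists, Finset.mem_image]
    exact ⟨l.get, Finset.mem_univ _, List.ofFn_get l⟩

open scoped Classical in
noncomputable def Bset (n k : ℕ) : Finset (List Bool) :=
  (lists (2 * n)).filter fun l => sval l = 0 ∧ low l = 2 * k

noncomputable def Bc (n k : ℕ) : ℕ := (Bset n k).card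

open scoped Classical in
noncomputable def dy (m : ℕ) : Finset (List Bool) :=
  (lists (2 * m)).filter fun w => sval w = 0 ∧ ∀ p, 0 ≤ ps w p

lemma sval_counts (w : List Bool) : sval w = (w.count true : ℤ) - (w.count false : ℤ) := by
  induction w with
  | nil => simp [sval]
  | cons b t ih =>
    cases b <;> simp [sval, List.count_cons, stepVal] at * <;> push_cast <;> omega

def toStep (b : Bool) : DyckStep := bif b then DyckStep.U else DyckStep.D
def ofStep (s : DyckStep) : Bool := match s with | DyckStep.U => true | DyckStep.D => false

@[simp] lemma ofStep_toStep (b : Bool) : ofStep (toStep b) = b := by cases b <;> rfl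
@[simp] lemma toStep_ofStep (s : DyckStep) : toStep (ofStep s) = s := by cases s <;> rfl

lemma count_U_map (w : List Bool) : (w.map toStep).count DyckStep.U = w.count true := by
  induction w with
  | nil => rfl
  | cons b t ih => cases b <;> simp [List.count_cons, toStep, ih]

lemma count_D_map (w : List Bool) : (w.map toStep).count DyckStep.D = w.count false := by
  induction w with
  | nil => rfl
  | cons b t ih => cases b <;> simp [List.count_cons, toStep, ih]

lemma count_true_ofStep (d : List DyckStep) : (d.map ofStep).count true = d.count DyckStep.U := by
  induction d with
  | nil => rfl
  | cons s t ih => cases s <;> simp [List.count_cons, ofStep, ih]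

lemma count_false_ofStep (d : List DyckStep) : (d.map ofStep).count false = d.count DyckStep.D := by
  induction d with
  | nil => rfl
  | cons s t ih => cases s <;> simp [List.count_cons, ofStep, ih]

lemma count_tf (l : List Bool) : l.count true + l.count false = l.length := by
  induction l with
  | nil => rfl
  | cons b t ih => cases b <;> simp [List.count_cons] <;> omega

lemma mem_dy {m : ℕ} {w : List Bool} :
    w ∈ dy m ↔ w.length = 2 * m ∧ sval w = 0 ∧ ∀ p, 0 ≤ ps w p := by
  classical
  rw [dy]
  simp only [Finset.mem_filter, mem_lists]

lemma mem_Bset {n k : ℕ} {l : List Bool} :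
    l ∈ Bset n k ↔ l.length = 2 * n ∧ sval l = 0 ∧ low l = 2 * k := by
  classical
  rw [Bset]
  simp only [Finset.mem_filter, mem_lists]

lemma dyA {m : ℕ} {w : List Bool} (hw : w ∈ dy m) :
    (w.map toStep).count DyckStep.U = (w.map toStep).count DyckStep.D := by
  obtain ⟨hlen, hsv, hnn⟩ := mem_dy.mp hw
  rw [count_U_map, count_D_map]
  have := sval_counts w
  omega

lemma dyB {m : ℕ} {w : List Bool} (hw : w ∈ dy m) (i : ℕ) :
    ((w.map toStep).take i).count DyckStep.D ≤ ((w.map toStep).take i).count DyckStep.U := by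
  obtain ⟨hlen, hsv, hnn⟩ := mem_dy.mp hw
  rw [← List.map_take, count_U_map, count_D_map]
  have h1 : (0:ℤ) ≤ ps w i := hnn i
  have h2 : sval (w.take i) = ((w.take i).count true : ℤ) - ((w.take i).count false : ℤ) :=
    sval_counts _
  have h3 : ps w i = sval (w.take i) := rfl
  omega

lemma dyC {m : ℕ} {w : List Bool} (hw : w ∈ dy m) :
    (w.map toStep).count DyckStep.U = m := by
  obtain ⟨hlen, hsv, hnn⟩ := mem_dy.mp hw
  rw [count_U_map]
  have h1 := count_tf w
  have h2 := sval_counts w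
  omega

noncomputable def toDW {m : ℕ} (w : List Bool) (hw : w ∈ dy m) :
    {p : DyckWord // p.semilength = m} :=
  ⟨⟨w.map toStep, dyA hw, fun i => dyB hw i⟩, dyC hw⟩

lemma toDW_toList {m : ℕ} (w : List Bool) (hw : w ∈ dy m) :
    ((toDW w hw).1 : List DyckStep) = w.map toStep := rfl

lemma card_dy (m : ℕ) : (dy m).card = catalan m := by
  classical
  rw [← DyckWord.card_dyckWord_semilength_eq_catalan m, Fintype.card]
  refine Finset.card_bij' (i := fun w hw => toDW w hw) (j := fun p _ => p.1.toList.map ofStep)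
    (fun _ _ => Finset.mem_univ _) ?_ ?_ ?_
  · intro p _
    rw [mem_dy]
    have hlen := p.1.two_mul_semilength_eq_length
    have hc := p.1.count_U_eq_count_D
    refine ⟨by rw [List.length_map, ← hlen, p.2], ?_, ?_⟩
    · rw [sval_counts, count_true_ofStep, count_false_ofStep, hc]; ring
    · intro i
      have h3 : ps (p.1.toList.map ofStep) i = sval ((p.1.toList.map ofStep).take i) := rfl
      rw [h3, ← List.map_take, sval_counts, count_true_ofStep, count_false_ofStep]
      have := p.1.count_D_le_count_U i
      omega
  · intro w hw
    show List.map ofStep ((toDW w hw).1 : List DyckStep) = w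
    rw [toDW_toList]
    simp [List.map_map, Function.comp_def]
  · intro p hp
    ext1
    ext1
    show ((toDW _ _).1 : List DyckStep) = _
    rw [toDW_toList]
    simp [List.map_map, Function.comp_def]



lemma low_eq_sum (l : List Bool) :
    low l = ∑ i ∈ Finset.range l.length,
      (if min (ps l i) (ps l (i + 1)) < 0 then 1 else 0) := by
  rw [low, lowA_sum]
  simp

lemma belowCard {m : ℕ} (f : Fin m → Bool) : (belowSteps f).card = low (List.ofFn f) := by
  rw [belowSteps, Finset.card_filter, low_eq_sum, List.length_ofFn,
    ← Fin.sum_univ_eq_sum_range]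
  rfl

lemma aCount_eq_Bc (n k : ℕ) : aCount n k = Bc n k := by
  classical
  rw [aCount, Bc]
  refine Finset.card_bij' (i := fun f _ => List.ofFn f)
    (j := fun l _ => fun i : Fin (2 * n) => l.getD i.1 false) ?_ ?_ ?_ ?_
  · intro f hf
    rw [Finset.mem_filter] at hf
    obtain ⟨-, h1, h2⟩ := hf
    rw [mem_Bset]
    refine ⟨(List.length_ofFn : (List.ofFn f).length = _), ?_, ?_⟩
    · have : psum f (2 * n) = ps (List.ofFn f) (2 * n) := rfl
      rw [← ps_of_le _ (le_of_eq (List.length_ofFn : (List.ofFn f).length = _)), ← this, h1]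
    · rw [← belowCard, h2]
  · intro l hl
    rw [mem_Bset] at hl
    obtain ⟨hlen, h1, h2⟩ := hl
    rw [Finset.mem_filter]
    have heq : List.ofFn (fun i : Fin (2 * n) => l.getD i.1 false) = l := by
      apply List.ext_getElem
      · simp [hlen]
      · intro i hi1 hi2
        simp only [List.getElem_ofFn]
        rw [List.getD_eq_getElem l false hi2]
    refine ⟨Finset.mem_univ _, ?_, ?_⟩
    · show ps (List.ofFn _) (2 * n) = 0
      rw [heq, ← hlen, ps_length, h1]
    · rw [belowCard, heq, h2]
  · intro f hf
    funext i
    have hi : (i : ℕ) < (List.ofFn f).length := by simp [i.2]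
    simp [List.getD_eq_getElem (List.ofFn f) false hi]
  · intro l hl
    rw [mem_Bset] at hl
    obtain ⟨hlen, -, -⟩ := hl
    apply List.ext_getElem
    · simp [hlen]
    · intro i hi1 hi2
      simp only [List.getElem_ofFn]
      rw [List.getD_eq_getElem l false hi2]

lemma Bc_eq_zero {n k : ℕ} (h : n < k) : Bc n k = 0 := by
  rw [Bc, Finset.card_eq_zero]
  rw [Finset.eq_empty_iff_forall_notMem]
  intro l hl
  rw [mem_Bset] at hl
  obtain ⟨hlen, -, hlow⟩ := hl
  have := lowA_le_length 0 l
  rw [← low] at this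
  omega

lemma Bc_zero : Bc 0 0 = 1 := by
  rw [Bc]
  have h : Bset 0 0 = {[]} := by
    ext l
    rw [mem_Bset, Finset.mem_singleton]
    constructor
    · rintro ⟨hlen, -, -⟩
      exact List.eq_nil_of_length_eq_zero (by omega)
    · rintro rfl
      exact ⟨by simp, rfl, rfl⟩
  rw [h, Finset.card_singleton]

lemma low_not (l : List Bool) : low (l.map not) = l.length - low l := by
  have := lowA_not 0 l
  rw [neg_zero] at this
  rw [low, low, this]

lemma Bc_refl {n k : ℕ} (hk : k ≤ n) : Bc n k = Bc n (n - k) := by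
  classical
  rw [Bc, Bc]
  refine Finset.card_bij' (i := fun l _ => l.map not) (j := fun l _ => l.map not) ?_ ?_ ?_ ?_
  · intro l hl
    rw [mem_Bset] at hl ⊢
    obtain ⟨hlen, h1, h2⟩ := hl
    refine ⟨by simp [hlen], by rw [sval_not, h1, neg_zero], ?_⟩
    rw [low_not, hlen, h2]
    omega
  · intro l hl
    rw [mem_Bset] at hl ⊢
    obtain ⟨hlen, h1, h2⟩ := hl
    refine ⟨by simp [hlen], by rw [sval_not, h1, neg_zero], ?_⟩
    rw [low_not, hlen, h2]
    omega
  · intro l _; simp [List.map_map, Function.comp_def]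
  · intro l _; simp [List.map_map, Function.comp_def]

open scoped Classical in
noncomputable def frN (l : List Bool) : ℕ :=
  if h : ∃ p, 0 < p ∧ ps l p = 0 then Nat.find h else 0

lemma frN_spec {l : List Bool} (hne : l ≠ []) (hb : sval l = 0) :
    0 < frN l ∧ ps l (frN l) = 0 ∧ (∀ q, 0 < q → q < frN l → ps l q ≠ 0) ∧
      frN l ≤ l.length := by
  classical
  have hex : ∃ p, 0 < p ∧ ps l p = 0 :=
    ⟨l.length, List.length_pos_iff.mpr hne, by rw [ps_length, hb]⟩
  rw [frN, dif_pos hex]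
  obtain ⟨h1, h2⟩ := Nat.find_spec hex
  refine ⟨h1, h2, ?_, ?_⟩
  · intro q hq1 hq2 hq3
    exact Nat.find_min hex hq2 ⟨hq1, hq3⟩
  · exact Nat.find_min' hex ⟨List.length_pos_iff.mpr hne, by rw [ps_length, hb]⟩

lemma frN_eq {l : List Bool} {p : ℕ} (h1 : 0 < p) (h2 : ps l p = 0)
    (h3 : ∀ q, 0 < q → q < p → ps l q ≠ 0) : frN l = p := by
  classical
  have hex : ∃ q, 0 < q ∧ ps l q = 0 := ⟨p, h1, h2⟩
  rw [frN, dif_pos hex]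
  obtain ⟨g1, g2⟩ := Nat.find_spec hex
  have hle : Nat.find hex ≤ p := Nat.find_min' hex ⟨h1, h2⟩
  rcases lt_or_eq_of_le hle with h | h
  · exact absurd g2 (h3 _ g1 h)
  · exact h

lemma sval_cons (b : Bool) (t : List Bool) : sval (b :: t) = stepVal b + sval t := by
  simp [sval]

lemma sval_append (a b : List Bool) : sval (a ++ b) = sval a + sval b := by
  simp [sval]

lemma ps_bound (l : List Bool) (q : ℕ) :
    ps l q - 1 ≤ ps l (q + 1) ∧ ps l (q + 1) ≤ ps l q + 1 := by
  by_cases h : q < l.length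
  · rw [ps_succ l h]
    cases l[q] <;> simp [stepVal] <;> omega
  · rw [ps_of_le l (by omega), ps_of_le l (by omega)]
    omega

lemma ps_pos (l : List Bool) (h1 : ps l 1 = 1) {N : ℕ}
    (hz : ∀ q, 0 < q → q < N → ps l q ≠ 0) :
    ∀ q, 0 < q → q < N → 0 < ps l q := by
  intro q
  induction q with
  | zero => omega
  | succ q ih =>
    intro _ hqN
    rcases Nat.eq_zero_or_pos q with rfl | hq
    · rw [h1]; norm_num
    · have hq' := ih hq (by omega)
      have hb := ps_bound l q
      have hnz := hz (q + 1) (by omega) hqN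
      omega

lemma ps_singleton_false (q : ℕ) : -1 ≤ ps [false] q := by
  cases q with
  | zero => simp
  | succ q => simp [ps, List.take_succ_cons, stepVal]

lemma ps_eq_sval_take (l : List Bool) (p : ℕ) : ps l p = sval (l.take p) := rfl

open scoped Classical in
noncomputable def Tset (n k m : ℕ) (b : Bool) : Finset (List Bool) :=
  (Bset n k).filter fun l => frN l = 2 * m + 2 ∧ l.headI = b

lemma mem_Tset {n k m : ℕ} {b : Bool} {l : List Bool} :
    l ∈ Tset n k m b ↔ l ∈ Bset n k ∧ frN l = 2 * m + 2 ∧ l.headI = b := by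
  classical
  rw [Tset, Finset.mem_filter]

lemma decomp {n k m : ℕ} (hm : m ≤ n) {l : List Bool}
    (hl : l ∈ Bset (n + 1) k) (hfr : frN l = 2 * m + 2) (hh : l.headI = true) :
    (l.drop 1).take (2 * m) ∈ dy m ∧ l.drop (2 * m + 2) ∈ Bset (n - m) k ∧
      l = true :: ((l.drop 1).take (2 * m) ++ false :: l.drop (2 * m + 2)) := by
  obtain ⟨hlen, hsv, hlow⟩ := mem_Bset.mp hl
  have hne : l ≠ [] := by
    intro h; rw [h] at hlen; simp at hlen
  obtain ⟨hpos, hzero, hnz, hle⟩ := frN_spec hne hsv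
  rw [hfr] at hpos hzero hnz hle
  cases l with
  | nil => exact absurd rfl hne
  | cons b t =>
    have hb : b = true := hh
    subst hb
    have hlent : t.length = 2 * n + 1 := by
      simp only [List.length_cons] at hlen; omega
    have h1 : ps (true :: t) 1 = 1 := by
      have := ps_cons true t 0
      simpa [stepVal] using this
    have hposq := ps_pos (true :: t) h1 hnz
    have h2m1 : ps (true :: t) (2 * m + 1) = 1 := by
      have ha := hposq (2 * m + 1) (by omega) (by omega)
      have hb2 := ps_bound (true :: t) (2 * m + 1)
      have he : 2 * m + 1 + 1 = 2 * m + 2 := by omega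
      rw [he] at hb2
      omega
    have hidx : 2 * m + 1 < (true :: t).length := by
      simp only [List.length_cons]; omega
    have hstep := ps_succ (true :: t) hidx
    rw [show 2 * m + 1 + 1 = 2 * m + 2 from by omega] at hstep
    have htfalse : t[2 * m]'(by omega) = false := by
      have : (true :: t)[2 * m + 1]'hidx = t[2 * m]'(by omega) := by
        simp
      rw [this] at hstep
      cases hv : t[2 * m]'(by omega)
      · rfl
      · rw [hv] at hstep
        simp [stepVal] at hstep
        omega
    -- partial sums of t
    have hpt : ∀ q, ps t q = ps (true :: t) (q + 1) - 1 := by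
      intro q
      rw [ps_cons]
      simp [stepVal]
    set w := t.take (2 * m) with hw
    set r := t.drop (2 * m + 1) with hr
    have hdect : t = w ++ false :: r := by
      rw [hw, hr]
      conv_lhs => rw [← List.take_append_drop (2 * m) t]
      congr 1
      rw [List.drop_eq_getElem_cons (by omega), htfalse]
    have hdrop1 : (true :: t).drop 1 = t := rfl
    have hdrop2 : (true :: t).drop (2 * m + 2) = r := by
      rw [List.drop_succ_cons, hr]
    have hlenw : w.length = 2 * m := by
      rw [hw, List.length_take]; omega
    have hwdy : w ∈ dy m := by
      rw [mem_dy]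
      refine ⟨hlenw, ?_, ?_⟩
      · rw [← ps_length, hlenw, hw, ps_take t (2 * m) (2 * m), min_self, hpt, h2m1]
        ring
      · intro p
        rw [hw, ps_take, hpt]
        have hmin : min p (2 * m) + 1 ≤ 2 * m + 1 := by omega
        have := hposq (min p (2 * m) + 1) (by omega) (by omega)
        omega
    -- the prefix
    set pr := true :: w ++ [false] with hpr
    have hdec : (true :: t) = pr ++ r := by
      rw [hpr, hdect]
      simp
    have hlenpr : pr.length = 2 * m + 2 := by
      rw [hpr]
      simp [hlenw]
    have hprtake : (true :: t).take (2 * m + 2) = pr := by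
      rw [hdec, List.take_left' hlenpr]
    have hsvpr : sval pr = 0 := by
      rw [← hprtake, ← ps_eq_sval_take, hzero]
    have hsvr : sval r = 0 := by
      have := sval_append pr r
      rw [← hdec, hsv, hsvpr] at this
      omega
    have hprnn : ∀ p, 0 ≤ (0:ℤ) + ps pr p := by
      intro p
      rw [zero_add, ← hprtake, ps_take]
      rcases Nat.eq_zero_or_pos (min p (2 * m + 2)) with h0 | h0
      · rw [h0]; simp
      · by_cases hq : min p (2 * m + 2) = 2 * m + 2
        · rw [hq, hzero]
        · have := hposq (min p (2 * m + 2)) h0 (by omega)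
          omega
    have hlowr : low r = 2 * k := by
      have : low (true :: t) = lowA 0 pr + lowA (0 + sval pr) r := by
        rw [low, hdec, lowA_append]
      rw [hsvpr, add_zero, lowA_eq_zero 0 pr hprnn, ← low] at this
      rw [← hlow, this, zero_add]
    have hrB : r ∈ Bset (n - m) k := by
      rw [mem_Bset]
      refine ⟨?_, hsvr, hlowr⟩
      rw [hr, List.length_drop]
      omega
    rw [hdrop1, hdrop2]
    exact ⟨hwdy, hrB, by rw [← hdect]⟩

lemma cardTpos {n k : ℕ} (m : ℕ) (hm : m ≤ n) :
    (Tset (n + 1) k m true).card = catalan m * Bc (n - m) k := by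
  classical
  rw [← card_dy m, Bc, ← Finset.card_product]
  refine Finset.card_bij' (i := fun l _ => ((l.drop 1).take (2 * m), l.drop (2 * m + 2)))
    (j := fun wr _ => true :: (wr.1 ++ false :: wr.2)) ?_ ?_ ?_ ?_
  · intro l hl
    rw [mem_Tset] at hl
    obtain ⟨h1, h2, h3⟩ := hl
    obtain ⟨g1, g2, -⟩ := decomp hm h1 h2 h3
    rw [Finset.mem_product]
    exact ⟨g1, g2⟩
  · rintro ⟨w, r⟩ hwr
    dsimp only
    rw [Finset.mem_product] at hwr
    dsimp only at hwr
    obtain ⟨hw, hr⟩ := hwr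
    obtain ⟨hlenw, hsvw, hnnw⟩ := mem_dy.mp hw
    obtain ⟨hlenr, hsvr, hlowr⟩ := mem_Bset.mp hr
    set l := true :: (w ++ false :: r) with hldef
    have hlenl : l.length = 2 * (n + 1) := by
      simp [hldef, hlenw, hlenr]
      omega
    have hps1 : ∀ p, ps l (p + 1) = 1 + ps (w ++ false :: r) p := by
      intro p
      rw [hldef, ps_cons]
      simp [stepVal]
    have hsplit : ∀ p, ps (w ++ false :: r) p = ps w p + ps (false :: r) (p - 2 * m) := by
      intro p
      rw [ps_append, hlenw]
    have hfr0 : ∀ q, ps (false :: r) (q + 1) = -1 + ps r q := by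
      intro q
      rw [ps_cons]
      simp [stepVal]
    have hintpos : ∀ q, 0 < q → q < 2 * m + 2 → 0 < ps l q := by
      intro q hq1 hq2
      obtain ⟨p, rfl⟩ : ∃ p, q = p + 1 := ⟨q - 1, by omega⟩
      rw [hps1, hsplit]
      have hp2m : p - 2 * m = 0 ∨ (p = 2 * m ∧ p - 2 * m = 0) := by omega
      have h0 : p - 2 * m = 0 := by omega
      rw [h0]
      have := hnnw p
      simp only [ps_zero, add_zero]
      omega
    have hzero : ps l (2 * m + 2) = 0 := by
      rw [hps1, hsplit]
      have : (2 * m + 1) - 2 * m = 1 := by omega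
      rw [this, hfr0, ps_zero, ps_of_le w (by omega), hsvw]
      ring
    have hsvl : sval l = 0 := by
      rw [hldef, sval_cons, sval_append, sval_cons, hsvw, hsvr]
      simp [stepVal]
    have hfrl : frN l = 2 * m + 2 :=
      frN_eq (by omega) hzero (fun q hq1 hq2 => ne_of_gt (hintpos q hq1 hq2))
    set pr := true :: w ++ [false] with hprdef
    have hdec : l = pr ++ r := by
      rw [hldef, hprdef]
      simp
    have hsvpr : sval pr = 0 := by
      rw [hprdef]
      simp only [List.cons_append, sval_cons, sval_append]
      rw [hsvw]
      simp [sval, stepVal]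
    have hprnn : ∀ p, 0 ≤ (0:ℤ) + ps pr p := by
      intro p
      rw [zero_add, hprdef]
      cases p with
      | zero => simp
      | succ q =>
        have : ps (true :: w ++ [false]) (q + 1) = 1 + ps (w ++ [false]) q := by
          rw [List.cons_append, ps_cons]
          simp [stepVal]
        rw [this, ps_append, hlenw]
        have := hnnw q
        have := ps_singleton_false (q - 2 * m)
        omega
    have hlowl : low l = 2 * k := by
      rw [low, hdec, lowA_append, lowA_eq_zero 0 pr hprnn, hsvpr, add_zero, zero_add, ← low,
        hlowr]
    rw [mem_Tset, mem_Bset]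
    exact ⟨⟨hlenl, hsvl, hlowl⟩, hfrl, rfl⟩
  · intro l hl
    rw [mem_Tset] at hl
    obtain ⟨h1, h2, h3⟩ := hl
    obtain ⟨-, -, g3⟩ := decomp hm h1 h2 h3
    exact g3.symm
  · rintro ⟨w, r⟩ hwr
    dsimp only
    rw [Finset.mem_product] at hwr
    dsimp only at hwr
    obtain ⟨hw, hr⟩ := hwr
    obtain ⟨hlenw, -, -⟩ := mem_dy.mp hw
    have e1 : ((true :: (w ++ false :: r)).drop 1).take (2 * m) = w := by
      rw [List.drop_succ_cons, List.drop_zero, List.take_left' hlenw]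
    have e2 : (true :: (w ++ false :: r)).drop (2 * m + 2) = r := by
      rw [List.drop_succ_cons]
      have : (2 : ℕ) * m + 1 = w.length + 1 := by omega
      rw [this, ← List.drop_drop, List.drop_left, List.drop_succ_cons, List.drop_zero]
    rw [e1, e2]

lemma headI_map_not {l : List Bool} (h : l ≠ []) : (l.map not).headI = ! l.headI := by
  cases l with
  | nil => exact absurd rfl h
  | cons b t => rfl

lemma cardTneg {n k : ℕ} (m : ℕ) (hk : k ≤ n + 1) :
    (Tset (n + 1) k m false).card = (Tset (n + 1) (n + 1 - k) m true).card := by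
  classical
  refine Finset.card_bij' (i := fun l _ => l.map not) (j := fun l _ => l.map not) ?_ ?_ ?_ ?_
  · intro l hl
    rw [mem_Tset, mem_Bset] at hl ⊢
    obtain ⟨⟨hlen, hsv, hlow⟩, hfr, hh⟩ := hl
    have hne : l ≠ [] := by intro h; rw [h] at hlen; simp at hlen
    obtain ⟨hpos, hzero, hnz, hle⟩ := frN_spec hne hsv
    refine ⟨⟨by simp [hlen], by rw [sval_not, hsv, neg_zero], ?_⟩, ?_, ?_⟩
    · rw [low_not, hlen, hlow]; omega
    · rw [← hfr]
      refine frN_eq hpos (by rw [ps_not, hzero, neg_zero]) ?_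
      intro q hq1 hq2
      rw [ps_not, neg_ne_zero]
      exact hnz q hq1 hq2
    · rw [headI_map_not hne, hh]; rfl
  · intro l hl
    rw [mem_Tset, mem_Bset] at hl ⊢
    obtain ⟨⟨hlen, hsv, hlow⟩, hfr, hh⟩ := hl
    have hne : l ≠ [] := by intro h; rw [h] at hlen; simp at hlen
    obtain ⟨hpos, hzero, hnz, hle⟩ := frN_spec hne hsv
    refine ⟨⟨by simp [hlen], by rw [sval_not, hsv, neg_zero], ?_⟩, ?_, ?_⟩
    · rw [low_not, hlen, hlow]; omega
    · rw [← hfr]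
      refine frN_eq hpos (by rw [ps_not, hzero, neg_zero]) ?_
      intro q hq1 hq2
      rw [ps_not, neg_ne_zero]
      exact hnz q hq1 hq2
    · rw [headI_map_not hne, hh]; rfl
  · intro l _; simp [List.map_map, Function.comp_def]
  · intro l _; simp [List.map_map, Function.comp_def]

lemma frN_facts {n k : ℕ} {l : List Bool} (hl : l ∈ Bset (n + 1) k) :
    2 ∣ frN l ∧ 2 ≤ frN l ∧ frN l ≤ 2 * (n + 1) := by
  obtain ⟨hlen, hsv, hlow⟩ := mem_Bset.mp hl
  have hne : l ≠ [] := by intro h; rw [h] at hlen; simp at hlen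
  obtain ⟨hpos, hzero, hnz, hle⟩ := frN_spec hne hsv
  have hpar := sval_parity (l.take (frN l))
  rw [← ps_eq_sval_take, hzero, List.length_take] at hpar
  rw [hlen] at hle
  have hdvd : 2 ∣ frN l := by omega
  exact ⟨hdvd, by omega, by omega⟩

lemma Bc_rec {n k : ℕ} (hk : k ≤ n + 1) :
    Bc (n + 1) k = ∑ m ∈ Finset.range (n + 1),
      (catalan m * Bc (n - m) k + catalan m * Bc (n - m) (n + 1 - k)) := by
  classical
  rw [Bc]
  rw [Finset.card_eq_sum_card_fiberwise (f := fun l => frN l / 2 - 1)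
    (t := Finset.range (n + 1)) (fun l hl => by
      obtain ⟨h1, h2, h3⟩ := frN_facts hl
      rw [Finset.mem_coe, Finset.mem_range]
      show frN l / 2 - 1 < n + 1
      omega)]
  apply Finset.sum_congr rfl
  intro m hm
  rw [Finset.mem_range] at hm
  have hfib : (Bset (n + 1) k).filter (fun l => frN l / 2 - 1 = m) =
      (Bset (n + 1) k).filter (fun l => frN l = 2 * m + 2) := by
    apply Finset.filter_congr
    intro l hl
    obtain ⟨h1, h2, h3⟩ := frN_facts hl
    constructor <;> intro h <;> omega
  rw [hfib]
  have hsplit := Finset.card_filter_add_card_filter_not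
    (s := (Bset (n + 1) k).filter (fun l => frN l = 2 * m + 2))
    (p := fun l => l.headI = true)
  have e1 : ((Bset (n + 1) k).filter (fun l => frN l = 2 * m + 2)).filter
      (fun l => l.headI = true) = Tset (n + 1) k m true := by
    rw [Tset, Finset.filter_filter]
  have e2 : ((Bset (n + 1) k).filter (fun l => frN l = 2 * m + 2)).filter
      (fun l => ¬ (l.headI = true)) = Tset (n + 1) k m false := by
    rw [Tset, Finset.filter_filter]
    apply Finset.filter_congr
    intro l _
    simp [Bool.not_eq_true]
  rw [e1, e2] at hsplit
  rw [← hsplit, cardTpos m (by omega), cardTneg m hk, cardTpos m (by omega)]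

lemma cat_sum {n k : ℕ} (hk : k ≤ n + 1) :
    ∑ m ∈ Finset.range (n + 1),
      ((if k ≤ n - m then catalan m * catalan (n - m) else 0) +
        (if m + 1 ≤ k then catalan m * catalan (n - m) else 0)) = catalan (n + 1) := by
  rw [Finset.sum_add_distrib]
  have h2 : ∑ m ∈ Finset.range (n + 1),
      (if m + 1 ≤ k then catalan m * catalan (n - m) else 0) =
      ∑ m ∈ Finset.range (n + 1),
      (if (n - m) + 1 ≤ k then catalan (n - m) * catalan (n - (n - m)) else 0) := by
    have := Finset.sum_range_reflect
      (fun m => if m + 1 ≤ k then catalan m * catalan (n - m) else 0) (n + 1)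
    rw [← this]
    apply Finset.sum_congr rfl
    intro m hm
    rw [Finset.mem_range] at hm
    congr 2 <;> omega
  rw [h2, ← Finset.sum_add_distrib, catalan_succ n, ← Finset.sum_range fun i => catalan i * catalan (n - i)]
  apply Finset.sum_congr rfl
  intro m hm
  rw [Finset.mem_range] at hm
  have hnm : n - (n - m) = m := by omega
  rw [hnm]
  by_cases h : k ≤ n - m
  · rw [if_pos h, if_neg (by omega), add_zero]
  · rw [if_neg h, if_pos (by omega), zero_add, Nat.mul_comm]

theorem Bc_main : ∀ n k : ℕ, k ≤ n → Bc n k = catalan n := by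
  intro n
  induction n using Nat.strong_induction_on with
  | _ n ih =>
    match n with
    | 0 => intro k hk; interval_cases k; rw [Bc_zero, catalan_zero]
    | Nat.succ n =>
      intro k hk
      rw [Bc_rec hk]
      have hterm : ∀ m ∈ Finset.range (n + 1),
          catalan m * Bc (n - m) k + catalan m * Bc (n - m) (n + 1 - k) =
          (if k ≤ n - m then catalan m * catalan (n - m) else 0) +
            (if m + 1 ≤ k then catalan m * catalan (n - m) else 0) := by
        intro m hm
        rw [Finset.mem_range] at hm
        congr 1
        · by_cases h : k ≤ n - m
          · rw [if_pos h, ih (n - m) (by omega) k h]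
          · rw [if_neg h, Bc_eq_zero (by omega), Nat.mul_zero]
        · by_cases h : m + 1 ≤ k
          · rw [if_pos h, ih (n - m) (by omega) (n + 1 - k) (by omega)]
          · rw [if_neg h, Bc_eq_zero (by omega), Nat.mul_zero]
      rw [Finset.sum_congr rfl hterm, cat_sum hk]

theorem aCount_eq (n k : ℕ) : aCount n k = if k ≤ n then catalan n else 0 := by
  rw [aCount_eq_Bc]
  by_cases h : k ≤ n
  · rw [if_pos h, Bc_main n k h]
  · rw [if_neg h, Bc_eq_zero (by omega)]

lemma cat_sum_int (n k : ℕ) :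
    (if k ≤ n + 1 then (catalan (n + 1) : ℤ) else 0) =
      ∑ j ∈ Finset.range (n + 1),
        ((catalan j : ℤ) * (if k ≤ n - j then (catalan (n - j) : ℤ) else 0) +
          (catalan j : ℤ) *
            (if j + 1 ≤ k ∧ k - (j + 1) ≤ n - j then (catalan (n - j) : ℤ) else 0)) := by
  by_cases hk : k ≤ n + 1
  · rw [if_pos hk]
    have h := cat_sum hk
    calc (catalan (n + 1) : ℤ) = ((∑ m ∈ Finset.range (n + 1),
        ((if k ≤ n - m then catalan m * catalan (n - m) else 0) +
          (if m + 1 ≤ k then catalan m * catalan (n - m) else 0)) : ℕ) : ℤ) := by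
          rw [h]
      _ = _ := by
          push_cast
          apply Finset.sum_congr rfl
          intro j hj
          rw [Finset.mem_range] at hj
          have hc : (j + 1 ≤ k ∧ k - (j + 1) ≤ n - j) ↔ j + 1 ≤ k := by
            constructor
            · rintro ⟨h1, -⟩; exact h1
            · intro h1; exact ⟨h1, by omega⟩
          rw [if_congr hc rfl rfl]
          split_ifs <;> push_cast <;> ring
  · rw [if_neg hk]
    symm
    apply Finset.sum_eq_zero
    intro j hj
    rw [Finset.mem_range] at hj
    rw [if_neg (by omega), if_neg (by omega)]
    ring

lemma Ngf_cc (m k : ℕ) :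
    (PowerSeries.coeff k) ((PowerSeries.coeff m) Ngf) =
      if k ≤ m then (catalan m : ℤ) else 0 := by
  have h1 : (PowerSeries.coeff m) Ngf =
      PowerSeries.mk fun k => (aCount m k : ℤ) := by
    simp only [Ngf, PowerSeries.coeff_mk]
  rw [h1, PowerSeries.coeff_mk, aCount_eq]
  split_ifs <;> simp

lemma coeff_u_zero :
    (PowerSeries.coeff 0)
      (1 - PowerSeries.X * cx - tvar * PowerSeries.X * ctx) = 1 := by
  rw [map_sub, map_sub, PowerSeries.coeff_one, if_pos rfl, PowerSeries.coeff_zero_X_mul,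
    mul_assoc, show tvar = PowerSeries.C (R := PowerSeries ℤ) PowerSeries.X from rfl,
    PowerSeries.coeff_C_mul, PowerSeries.coeff_zero_X_mul, mul_zero, sub_zero, sub_zero]

lemma coeff_u_succ (j : ℕ) :
    (PowerSeries.coeff (j + 1))
      (1 - PowerSeries.X * cx - tvar * PowerSeries.X * ctx) =
      - (PowerSeries.C (catalan j : ℤ) +
          PowerSeries.C (catalan j : ℤ) * PowerSeries.X ^ (j + 1)) := by
  rw [map_sub, map_sub, PowerSeries.coeff_one, if_neg (Nat.succ_ne_zero j),
    PowerSeries.coeff_succ_X_mul, mul_assoc,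
    show tvar = PowerSeries.C (R := PowerSeries ℤ) PowerSeries.X from rfl,
    PowerSeries.coeff_C_mul, PowerSeries.coeff_succ_X_mul]
  have hcx : (PowerSeries.coeff j) cx = ((catalan j : ℤ) : PowerSeries ℤ) := by
    simp only [cx, PowerSeries.coeff_mk]
  have hctx : (PowerSeries.coeff j) ctx =
      ((catalan j : ℤ) : PowerSeries ℤ) * PowerSeries.X ^ j := by
    simp only [ctx, PowerSeries.coeff_mk]
  rw [hcx, hctx]
  have hc : ((catalan j : ℤ) : PowerSeries ℤ) = PowerSeries.C (catalan j : ℤ) :=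
    (map_intCast (PowerSeries.C (R := ℤ)) _).symm
  rw [hc]
  ring

theorem gf_identity :
    (1 - PowerSeries.X * cx - tvar * PowerSeries.X * ctx) * Ngf = 1 := by
  apply PowerSeries.ext
  intro n
  rw [PowerSeries.coeff_mul, Finset.Nat.sum_antidiagonal_eq_sum_range_succ_mk]
  cases n with
  | zero =>
    rw [Finset.sum_range_one, coeff_u_zero, one_mul, PowerSeries.coeff_one, if_pos rfl]
    apply PowerSeries.ext
    intro k
    rw [Ngf_cc, PowerSeries.coeff_one]
    rcases Nat.eq_zero_or_pos k with rfl | hk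
    · rw [if_pos (le_refl 0), if_pos rfl, catalan_zero, Nat.cast_one]
    · rw [if_neg (by omega), if_neg (by omega)]
  | succ n =>
    rw [Finset.sum_range_succ', PowerSeries.coeff_one, if_neg (Nat.succ_ne_zero n)]
    rw [coeff_u_zero, one_mul, Nat.sub_zero]
    apply PowerSeries.ext
    intro k
    rw [map_add, map_sum]
    have hterm : ∀ j ∈ Finset.range (n + 1),
        (PowerSeries.coeff k)
          ((PowerSeries.coeff (j + 1))
              (1 - PowerSeries.X * cx - tvar * PowerSeries.X * ctx) *
            (PowerSeries.coeff (n + 1 - (j + 1))) Ngf) =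
        -((catalan j : ℤ) * (if k ≤ n - j then (catalan (n - j) : ℤ) else 0) +
          (catalan j : ℤ) *
            (if j + 1 ≤ k ∧ k - (j + 1) ≤ n - j then (catalan (n - j) : ℤ) else 0)) := by
      intro j hj
      have hidx : n + 1 - (j + 1) = n - j := by omega
      rw [hidx, coeff_u_succ]
      set A := (PowerSeries.coeff (n - j)) Ngf with hA
      have hprod : -(PowerSeries.C (catalan j : ℤ) +
          PowerSeries.C (catalan j : ℤ) * PowerSeries.X ^ (j + 1)) * A =
          -(PowerSeries.C (catalan j : ℤ) * A +
            PowerSeries.C (catalan j : ℤ) * (A * PowerSeries.X ^ (j + 1))) := by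
        ring
      rw [hprod, map_neg, map_add, PowerSeries.coeff_C_mul, PowerSeries.coeff_C_mul,
        PowerSeries.coeff_mul_X_pow', hA, Ngf_cc]
      congr 2
      by_cases h1 : j + 1 ≤ k
      · rw [if_pos h1, Ngf_cc]
        by_cases h2 : k - (j + 1) ≤ n - j
        · rw [if_pos h2, if_pos ⟨h1, h2⟩]
        · rw [if_neg h2, if_neg (by tauto)]
      · rw [if_neg h1, if_neg (by tauto)]
    rw [Finset.sum_congr rfl hterm, Ngf_cc, map_zero]
    dsimp only
    rw [Finset.sum_neg_distrib, ← cat_sum_int n k, neg_add_cancel]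

end CF


/-- N(t,x) = 1/(1 − x·c(x) − t·x·c(tx)); consequently a(n,k) = C_n for 0 ≤ k ≤ n
and a(n,k) = 0 for k > n. -/
theorem Ngf_identity :
    (1 - PowerSeries.X * cx - tvar * PowerSeries.X * ctx) * Ngf = 1 ∧
    (∀ n k : ℕ, k ≤ n → aCount n k = catalan n) ∧
    (∀ n k : ℕ, n < k → aCount n k = 0) := by
  refine ⟨CF.gf_identity, ?_, ?_⟩
  · intro n k h
    rw [CF.aCount_eq, if_pos h]
  · intro n k h
    rw [CF.aCount_eq, if_neg (by omega)]
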